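/- The group presented by two generators a, b subject to the two relations aba = bab and (ab)⁶ = 1 is isomorphic to SL(2,ℤ), via the isomorphism induced by a ↦ u₁₂ and b ↦ u₂₁. (In other words, imposing the braid relation and (ab)⁶ = 1 on the two generators u₁₂, u₂₁ gives an abstract presentation of the modular group SL(2,ℤ).) -/

import Mathlib

/-- The relations `aba = bab` and `(ab)⁶ = 1` on two generators (indexed by
`Bool`, with `true ↦ a` and `false ↦ b`). -/
def modRels : Set (FreeGroup Bool) :=
  {FreeGroup.of true * FreeGroup.of false * FreeGroup.of true *
    (FreeGroup.of false * FreeGroup.of true * FreeGroup.of false)⁻¹,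
   (FreeGroup.of true * FreeGroup.of false) ^ 6}

/-- The matrix `u₁₂ = [[1,1],[0,1]]` in `SL(2,ℤ)`. -/
def u12 : Matrix.SpecialLinearGroup (Fin 2) ℤ :=
  ⟨!![1, 1; 0, 1], by norm_num [Matrix.det_fin_two_of]⟩

/-- The matrix `u₂₁ = [[1,0],[-1,1]]` in `SL(2,ℤ)`. -/
def u21 : Matrix.SpecialLinearGroup (Fin 2) ℤ :=
  ⟨!![1, 0; -1, 1], by norm_num [Matrix.det_fin_two_of]⟩

namespace SL2ZPresentation

open UpperHalfPlane

abbrev SL2Z := Matrix.SpecialLinearGroup (Fin 2) ℤ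

/-! ### Generic helper: homomorphisms out of `Multiplicative (ZMod n)` -/

/-- Hom from `Multiplicative (ZMod n)` determined by an element `k` with `k ^ n = 1`. -/
def zmodHom {K : Type*} [Group K] (n : ℕ) (k : K) (h : k ^ n = 1) :
    Multiplicative (ZMod n) →* K :=
  AddMonoidHom.toMultiplicativeLeft
    (ZMod.lift n ⟨zmultiplesHom (Additive K) (Additive.ofMul k), by
      have : k ^ (n : ℤ) = 1 := by simpa using h
      simpa [zmultiplesHom_apply, ← ofMul_zpow] using congrArg Additive.ofMul this⟩)

lemma zmodHom_apply {K : Type*} [Group K] (n : ℕ) (k : K) (h : k ^ n = 1) (m : ℤ) :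
    zmodHom n k h (Multiplicative.ofAdd (m : ZMod n)) = k ^ m := by
  simp [zmodHom, ← ofMul_zpow]

lemma multZmod_eq_pow {n : ℕ} [NeZero n] (x : Multiplicative (ZMod n)) :
    x = Multiplicative.ofAdd (1 : ZMod n) ^ (Multiplicative.toAdd x).val := by
  rw [← ofAdd_nsmul, nsmul_eq_mul, mul_one]
  simp [ZMod.natCast_val, ZMod.cast_id]

lemma multZmod_hom_eq_pow {n : ℕ} [NeZero n] {K : Type*} [Group K]
    (F : Multiplicative (ZMod n) →* K) (x : Multiplicative (ZMod n)) :
    F x = (F (Multiplicative.ofAdd (1 : ZMod n))) ^ (Multiplicative.toAdd x).val := by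
  rw [← map_pow]
  congr 1
  exact multZmod_eq_pow x

/-! ### Matrix computations in `SL(2, ℤ)` -/

lemma braid : u12 * u21 * u12 = u21 * u12 * u21 := by
  ext i j
  simp only [Matrix.SpecialLinearGroup.coe_mul]
  fin_cases i <;> fin_cases j <;>
    simp [u12, u21, Matrix.mul_apply, Fin.sum_univ_succ]

lemma up_pow6 : (u12 * u21) ^ 6 = 1 := by
  ext i j
  simp only [Matrix.SpecialLinearGroup.coe_pow, Matrix.SpecialLinearGroup.coe_mul]
  fin_cases i <;> fin_cases j <;>
    simp [u12, u21, pow_succ, Matrix.mul_apply, Fin.sum_univ_succ]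

/-- `sg = [[0,1],[-1,0]]`, an element of order 4. -/
def sg : SL2Z := u12 * u21 * u12

/-- `up = [[0,1],[-1,1]]`, an element of order 6. -/
def up : SL2Z := u12 * u21

lemma coe_sg : (sg : Matrix (Fin 2) (Fin 2) ℤ) = !![0, 1; -1, 0] := by
  simp only [sg, Matrix.SpecialLinearGroup.coe_mul]
  simp [sg, u12, u21, Matrix.SpecialLinearGroup.coe_mul, Matrix.mul_fin_two]

lemma coe_up : (up : Matrix (Fin 2) (Fin 2) ℤ) = !![0, 1; -1, 1] := by
  simp only [up, Matrix.SpecialLinearGroup.coe_mul]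
  simp [up, u12, u21, Matrix.SpecialLinearGroup.coe_mul, Matrix.mul_fin_two]

lemma coe_up_sq : ((up ^ 2 : SL2Z) : Matrix (Fin 2) (Fin 2) ℤ) = !![-1, 1; -1, 0] := by
  rw [sq, Matrix.SpecialLinearGroup.coe_mul, coe_up, Matrix.mul_fin_two]; norm_num

lemma coe_up_cube : ((up ^ 3 : SL2Z) : Matrix (Fin 2) (Fin 2) ℤ) = !![-1, 0; 0, -1] := by
  rw [pow_succ, Matrix.SpecialLinearGroup.coe_mul, coe_up_sq, coe_up, Matrix.mul_fin_two]
  norm_num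

lemma up_cube_eq_sg_sq : up ^ 3 = sg ^ 2 := by
  ext i j
  rw [coe_up_cube, sq, Matrix.SpecialLinearGroup.coe_mul, coe_sg, Matrix.mul_fin_two]
  norm_num

lemma up_cube_ne_one : up ^ 3 ≠ 1 := by
  intro h
  have h' : ((up ^ 3 : SL2Z) : Matrix (Fin 2) (Fin 2) ℤ)
      = ((1 : SL2Z) : Matrix (Fin 2) (Fin 2) ℤ) := by rw [h]
  rw [coe_up_cube, Matrix.SpecialLinearGroup.coe_one] at h'
  have := congrFun (congrFun h' 0) 0
  simp at this

lemma u12_zpow (n : ℤ) : ((u12 ^ n : SL2Z) : Matrix (Fin 2) (Fin 2) ℤ) = !![1, n; 0, 1] := by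
  have : u12 = ModularGroup.T := by ext i j; fin_cases i <;> fin_cases j <;> rfl
  rw [this, ModularGroup.coe_T_zpow]

/-! ### Surjectivity: `u12` and `u21` generate `SL(2, ℤ)` -/

lemma natAbs_emod_lt (a c : ℤ) (h : c ≠ 0) : (a % c).natAbs < c.natAbs := by
  have h1 : 0 ≤ a % c := Int.emod_nonneg a h
  have h2 : a % c < |c| := Int.emod_lt_abs a h
  rw [Int.abs_eq_natAbs] at h2
  omega

lemma mem_closure_aux (n : ℕ) : ∀ M : SL2Z, ((M : Matrix (Fin 2) (Fin 2) ℤ) 1 0).natAbs = n →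
    M ∈ Subgroup.closure ({u12, u21} : Set SL2Z) := by
  induction n using Nat.strong_induction_on with
  | _ n ih =>
    intro M hM
    set Hc := Subgroup.closure ({u12, u21} : Set SL2Z) with hHc
    have h12 : u12 ∈ Hc := Subgroup.subset_closure (Set.mem_insert _ _)
    have h21 : u21 ∈ Hc := Subgroup.subset_closure (Set.mem_insert_of_mem _ rfl)
    have hsg : sg ∈ Hc := Subgroup.mul_mem _ (Subgroup.mul_mem _ h12 h21) h12
    have hup : up ∈ Hc := Subgroup.mul_mem _ h12 h21
    set a := (M : Matrix (Fin 2) (Fin 2) ℤ) 0 0 with ha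
    set bb := (M : Matrix (Fin 2) (Fin 2) ℤ) 0 1 with hb
    set c := (M : Matrix (Fin 2) (Fin 2) ℤ) 1 0 with hc
    set d := (M : Matrix (Fin 2) (Fin 2) ℤ) 1 1 with hd
    have hdet : a * d - bb * c = 1 := by
      have := M.2
      rw [Matrix.det_fin_two] at this
      exact this
    have hMeta : (M : Matrix (Fin 2) (Fin 2) ℤ) = !![a, bb; c, d] := Matrix.eta_fin_two _
    by_cases hc0 : c = 0
    · have had : a * d = 1 := by rw [hc0] at hdet; linarith
      rcases Int.eq_one_or_neg_one_of_mul_eq_one' had with ⟨ha1, hd1⟩ | ⟨ha1, hd1⟩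
      · have : M = u12 ^ bb := by
          ext i j
          rw [u12_zpow, hMeta, ha1, hd1, hc0]
        rw [this]
        exact Subgroup.zpow_mem _ h12 _
      · have : M = up ^ 3 * u12 ^ (-bb) := by
          ext i j
          rw [Matrix.SpecialLinearGroup.coe_mul, coe_up_cube, u12_zpow, hMeta, ha1, hd1, hc0,
            Matrix.mul_fin_two]
          norm_num
        rw [this]
        exact Subgroup.mul_mem _ (Subgroup.pow_mem _ hup _) (Subgroup.zpow_mem _ h12 _)
    · set q := a / c with hq
      set N := sg * (u12 ^ (-q) * M) with hN
      have hNc : (N : Matrix (Fin 2) (Fin 2) ℤ) 1 0 = -(a % c) := by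
        rw [hN, Matrix.SpecialLinearGroup.coe_mul, Matrix.SpecialLinearGroup.coe_mul,
          coe_sg, u12_zpow, hMeta, Matrix.mul_fin_two, Matrix.mul_fin_two]
        simp
        rw [Int.emod_def]
        ring
      have hNlt : ((N : Matrix (Fin 2) (Fin 2) ℤ) 1 0).natAbs < n := by
        rw [hNc, Int.natAbs_neg, ← hM]
        exact natAbs_emod_lt a c hc0
      have hNmem : N ∈ Hc := ih _ hNlt N rfl
      have : M = u12 ^ q * (sg⁻¹ * N) := by
        rw [hN]
        simp [← mul_assoc, ← zpow_add]
      rw [this]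
      exact Subgroup.mul_mem _ (Subgroup.zpow_mem _ h12 _)
        (Subgroup.mul_mem _ (Subgroup.inv_mem _ hsg) hNmem)

lemma closure_eq_top : Subgroup.closure ({u12, u21} : Set SL2Z) = ⊤ := by
  rw [eq_top_iff]
  intro M _
  exact mem_closure_aux _ M rfl

/-! ### Action on the upper half plane: sign lemmas for the real part -/

lemma lemA {g : SL2Z} (h : (g : Matrix (Fin 2) (Fin 2) ℤ) = !![0, 1; -1, 0]) (τ : ℍ)
    (hre : 0 < τ.re) : (g • τ).re < 0 := by
  have hτ : (τ : ℂ) ≠ 0 := UpperHalfPlane.ne_zero τ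
  have hc : ((g • τ : ℍ) : ℂ) = (-(τ : ℂ))⁻¹ := by
    rw [UpperHalfPlane.specialLinearGroup_apply]; simp [h]
  have : (g • τ).re = (-(τ : ℂ))⁻¹.re := by rw [← UpperHalfPlane.coe_re, hc]
  rw [this, Complex.inv_re]
  have hns : 0 < Complex.normSq (-(τ : ℂ)) := by
    rw [Complex.normSq_pos]; simpa using hτ
  have : (-(τ : ℂ)).re = -τ.re := by simp [UpperHalfPlane.coe_re]
  rw [this]
  exact div_neg_of_neg_of_pos (by linarith) hns

lemma lemB {g : SL2Z} (h : (g : Matrix (Fin 2) (Fin 2) ℤ) = !![0, 1; -1, 1]) (τ : ℍ)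
    (hre : τ.re < 0) : 0 < (g • τ).re := by
  have hc : ((g • τ : ℍ) : ℂ) = (1 - (τ : ℂ))⁻¹ := by
    rw [UpperHalfPlane.specialLinearGroup_apply]; simp [h]; ring_nf
  have : (g • τ).re = (1 - (τ : ℂ))⁻¹.re := by rw [← UpperHalfPlane.coe_re, hc]
  rw [this, Complex.inv_re]
  have h1 : (1 - (τ : ℂ)).re = 1 - τ.re := by simp [UpperHalfPlane.coe_re]
  have hne : (1 - (τ : ℂ)) ≠ 0 := by
    intro h0
    have := congrArg Complex.re h0
    rw [h1] at this
    simp at this; linarith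
  have hns : 0 < Complex.normSq (1 - (τ : ℂ)) := by rwa [Complex.normSq_pos]
  rw [h1]
  exact div_pos (by linarith) hns

lemma lemC {g : SL2Z} (h : (g : Matrix (Fin 2) (Fin 2) ℤ) = !![-1, 1; -1, 0]) (τ : ℍ)
    (hre : τ.re < 0) : 0 < (g • τ).re := by
  have hτ : (τ : ℂ) ≠ 0 := UpperHalfPlane.ne_zero τ
  have hc : ((g • τ : ℍ) : ℂ) = 1 - ((τ : ℂ))⁻¹ := by
    rw [UpperHalfPlane.specialLinearGroup_apply]; push_cast [h]
    simp
    field_simp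
    ring_nf
  have : (g • τ).re = (1 - ((τ : ℂ))⁻¹).re := by rw [← UpperHalfPlane.coe_re, hc]
  rw [this]
  have hns : 0 < Complex.normSq (τ : ℂ) := by rwa [Complex.normSq_pos]
  have : (1 - ((τ : ℂ))⁻¹).re = 1 - τ.re / Complex.normSq (τ : ℂ) := by
    rw [Complex.sub_re, Complex.inv_re, UpperHalfPlane.coe_re]; norm_num
  rw [this]
  have : τ.re / Complex.normSq (τ : ℂ) < 0 := div_neg_of_neg_of_pos hre hns
  linarith

lemma lemD {g : SL2Z} (h : (g : Matrix (Fin 2) (Fin 2) ℤ) = !![-1, 0; 0, -1]) (τ : ℍ) :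
    g • τ = τ := by
  have hτ : (τ : ℂ) ≠ 0 := UpperHalfPlane.ne_zero τ
  apply UpperHalfPlane.ext
  show ((g • τ : ℍ) : ℂ) = τ
  rw [UpperHalfPlane.specialLinearGroup_apply]
  push_cast [h]
  simp

/-! ### The presented group -/

abbrev G := PresentedGroup modRels

def a : G := .of true
def b : G := .of false

lemma mk_rel_one {r : FreeGroup Bool} (hr : r ∈ modRels) : PresentedGroup.mk modRels r = 1 :=
  (QuotientGroup.eq_one_iff _).2 (Subgroup.subset_normalClosure hr)

lemma mk_of (x : Bool) : PresentedGroup.mk modRels (FreeGroup.of x) = PresentedGroup.of x := rfl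

lemma rel1 : a * b * a = b * a * b := by
  have h := mk_rel_one (Set.mem_insert _ _)
  simp only [map_mul, map_inv, mk_of] at h
  have := mul_inv_eq_one.mp h
  simpa [a, b] using this

lemma rel2 : (a * b) ^ 6 = 1 := by
  have h := mk_rel_one (Set.mem_insert_of_mem _ rfl)
  simpa only [map_mul, map_pow, mk_of, a, b] using h

def s : G := a * b * a
def u : G := a * b
def z : G := u ^ 3

lemma s_sq : s ^ 2 = z := by
  show (a * b * a) ^ 2 = (a * b) ^ 3
  calc (a * b * a) ^ 2 = (a * b * a) * (b * a * b) := by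
        rw [← rel1]; simp [pow_succ, mul_assoc]
    _ = (a * b) ^ 3 := by simp [pow_succ, mul_assoc]

lemma z_sq : z ^ 2 = 1 := by
  show ((a * b) ^ 3) ^ 2 = 1
  rw [← pow_mul]; exact rel2

lemma s_mul_a : s * a = b * s := by
  show (a * b * a) * a = b * (a * b * a)
  conv_lhs => rw [rel1]
  simp [mul_assoc]

lemma s_mul_b : s * b = a * s := by
  show (a * b * a) * b = a * (a * b * a)
  calc (a * b * a) * b = a * (b * a * b) := by simp [mul_assoc]
    _ = a * (a * b * a) := by rw [← rel1]

lemma z_comm (g : G) : z * g = g * z := by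
  have ha : s ^ 2 * a = a * s ^ 2 := by
    rw [sq, mul_assoc, s_mul_a, ← mul_assoc, s_mul_b, mul_assoc]
  have hb : s ^ 2 * b = b * s ^ 2 := by
    rw [sq, mul_assoc, s_mul_b, ← mul_assoc, s_mul_a, mul_assoc]
  rw [← s_sq]
  induction g using PresentedGroup.induction_on with
  | H w =>
    have : PresentedGroup.mk modRels w ∈ Subgroup.centralizer {s ^ 2} := by
      have hcl : Subgroup.closure (Set.range (PresentedGroup.of : Bool → G)) = ⊤ :=
        PresentedGroup.closure_range_of modRels
      have hmem : PresentedGroup.mk modRels w ∈ (⊤ : Subgroup G) := trivial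
      rw [← hcl] at hmem
      refine Subgroup.closure_induction ?_ ?_ ?_ ?_ hmem
      · rintro x ⟨i, rfl⟩
        cases i
        · simpa [Subgroup.mem_centralizer_singleton_iff, b] using hb.symm
        · simpa [Subgroup.mem_centralizer_singleton_iff, a] using ha.symm
      · simp [Subgroup.one_mem]
      · intro x y _ _ hx hy; exact Subgroup.mul_mem _ hx hy
      · intro x _ hx; exact Subgroup.inv_mem _ hx
    rw [Subgroup.mem_centralizer_singleton_iff] at this
    exact this.symm

/-! ### The homomorphism to `SL(2, ℤ)` -/

def fgen : Bool → SL2Z := fun x => cond x u12 u21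

lemma rels_hold : ∀ r ∈ modRels, FreeGroup.lift fgen r = 1 := by
  intro r hr
  rcases hr with rfl | rfl
  · simp only [map_mul, map_inv, FreeGroup.lift_apply_of, fgen, cond]
    rw [mul_inv_eq_one]
    exact braid
  · simp only [map_mul, map_pow, FreeGroup.lift_apply_of, fgen, cond]
    exact up_pow6

def φ : G →* SL2Z := PresentedGroup.toGroup rels_hold

lemma φ_a : φ a = u12 := PresentedGroup.toGroup.of rels_hold
lemma φ_b : φ b = u21 := PresentedGroup.toGroup.of rels_hold

lemma φ_s : φ s = sg := by rw [s, sg, map_mul, map_mul, φ_a, φ_b]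
lemma φ_u : φ u = up := by rw [u, up, map_mul, φ_a, φ_b]
lemma φ_z : φ z = up ^ 3 := by rw [z, map_pow, φ_u]

lemma φ_surjective : Function.Surjective φ := by
  intro M
  have hM : M ∈ Subgroup.closure ({u12, u21} : Set SL2Z) := by
    rw [closure_eq_top]; trivial
  have : Subgroup.closure ({u12, u21} : Set SL2Z) ≤ φ.range := by
    rw [Subgroup.closure_le]
    rintro x (rfl | rfl)
    · exact ⟨a, φ_a⟩
    · exact ⟨b, φ_b⟩
  exact this hM

/-! ### Injectivity via the ping-pong lemma -/

def Z' : Subgroup G := Subgroup.zpowers z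

instance : Z'.Normal := by
  constructor
  intro x hx g
  rcases Subgroup.mem_zpowers_iff.mp hx with ⟨k, rfl⟩
  have hc : Commute z g := z_comm g
  have hcomm : Commute (z ^ k) g := hc.zpow_left k
  rw [← hcomm.eq, mul_assoc, mul_inv_cancel, mul_one]
  exact Subgroup.zpow_mem _ (Subgroup.mem_zpowers z) k

abbrev Gbar := G ⧸ Z'

def π : G →* Gbar := QuotientGroup.mk' Z'

lemma π_z : π z = 1 := (QuotientGroup.eq_one_iff _).2 (Subgroup.mem_zpowers z)

lemma πs_sq : (π s) ^ 2 = 1 := by rw [← map_pow, s_sq, π_z]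
lemma πu_cube : (π u) ^ 3 = 1 := by rw [← map_pow, ← z, π_z]

/-- The two factor groups for the free product. -/
abbrev nn : Bool → ℕ := fun i => Bool.rec 3 2 i

abbrev Hfam : Bool → Type := fun i => Multiplicative (ZMod (nn i))

abbrev Q := Monoid.CoprodI Hfam

/-- The homomorphisms from the factors into `Gbar`. -/
def αf : ∀ i : Bool, Hfam i →* Gbar := fun i =>
  match i with
  | true => zmodHom 2 (π s) πs_sq
  | false => zmodHom 3 (π u) πu_cube

def α : Q →* Gbar := Monoid.CoprodI.lift αf

/-- The action of `SL(2,ℤ)` on `ℍ` as permutations. -/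
noncomputable def κ : SL2Z →* Equiv.Perm ℍ := MulAction.toPermHom SL2Z ℍ

lemma κ_smul (g : SL2Z) (τ : ℍ) : (κ g) • τ = g • τ := rfl

lemma κ_eq_one {g : SL2Z} (h : ∀ τ : ℍ, g • τ = τ) : κ g = 1 := by
  ext τ
  show ((κ g) τ : ℂ) = ((1 : Equiv.Perm ℍ) τ : ℂ)
  have h1 : (κ g) τ = g • τ := rfl
  have h2 : (1 : Equiv.Perm ℍ) τ = τ := rfl
  rw [h1, h2, h τ]

lemma κ_sg_sq : (κ sg) ^ 2 = 1 := by
  rw [← map_pow]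
  exact κ_eq_one (fun τ => lemD (by rw [← up_cube_eq_sg_sq]; exact coe_up_cube) τ)

lemma κ_up_cube : (κ up) ^ 3 = 1 := by
  rw [← map_pow]
  exact κ_eq_one (fun τ => lemD coe_up_cube τ)

/-- The homomorphisms from the factors into `Equiv.Perm ℍ`. -/
noncomputable def βf : ∀ i : Bool, Hfam i →* Equiv.Perm ℍ := fun i =>
  match i with
  | true => zmodHom 2 (κ sg) κ_sg_sq
  | false => zmodHom 3 (κ up) κ_up_cube

noncomputable def β : Q →* Equiv.Perm ℍ := Monoid.CoprodI.lift βf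

/-- The ping-pong sets. -/
def X : Bool → Set ℍ := fun i => cond i {τ : ℍ | τ.re < 0} {τ : ℍ | 0 < τ.re}

lemma βf_false_one : βf false (Multiplicative.ofAdd ((1 : ℤ) : ZMod 3)) = κ up := by
  rw [show βf false = zmodHom 3 (κ up) κ_up_cube from rfl, zmodHom_apply]
  exact zpow_one _

lemma βf_false_two : βf false (Multiplicative.ofAdd ((2 : ℤ) : ZMod 3)) = (κ up) ^ 2 := by
  rw [show βf false = zmodHom 3 (κ up) κ_up_cube from rfl, zmodHom_apply,
    show (2 : ℤ) = ((2 : ℕ) : ℤ) from rfl, zpow_natCast]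

lemma βf_true_one : βf true (Multiplicative.ofAdd ((1 : ℤ) : ZMod 2)) = κ sg := by
  rw [show βf true = zmodHom 2 (κ sg) κ_sg_sq from rfl, zmodHom_apply]
  exact zpow_one _

lemma β_injective : Function.Injective β := by
  apply Monoid.CoprodI.lift_injective_of_ping_pong βf _ X
  · intro i
    cases i
    · refine ⟨⟨Complex.I + 1, by simp⟩, ?_⟩
      show (0 : ℝ) < (Complex.I + 1).re
      simp
    · refine ⟨⟨Complex.I - 1, by simp⟩, ?_⟩
      show (Complex.I - 1).re < 0
      simp
  · intro i j hij
    simp only [Function.onFun]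
    cases i <;> cases j <;> try exact absurd rfl hij
    all_goals
      rw [Set.disjoint_left]
      intro τ h1 h2
      simp [X] at h1 h2
      linarith
  · intro i j hij
    intro h hne
    cases i
    · -- i = false : h ∈ Multiplicative (ZMod 3), maps X true into X false
      have hj : j = true := by
        cases j
        · exact absurd rfl hij
        · rfl
      subst hj
      have hcases : h = Multiplicative.ofAdd ((1 : ℤ) : ZMod 3)
          ∨ h = Multiplicative.ofAdd ((2 : ℤ) : ZMod 3) := by
        revert hne
        revert h
        decide
      rintro τ' ⟨τ, hτ, rfl⟩
      have hτ' : τ.re < 0 := hτ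
      show βf false h • τ ∈ X false
      rcases hcases with rfl | rfl
      · rw [βf_false_one]
        show 0 < ((κ up) • τ).re
        rw [κ_smul]
        exact lemB coe_up τ hτ'
      · rw [βf_false_two]
        show 0 < (((κ up) ^ 2) • τ).re
        have : ((κ up) ^ 2) • τ = (up ^ 2) • τ := by
          rw [← map_pow]
          exact κ_smul _ τ
        rw [this]
        exact lemC coe_up_sq τ hτ'
    · -- i = true : h ∈ Multiplicative (ZMod 2), maps X false into X true
      have hj : j = false := by
        cases j
        · rfl
        · exact absurd rfl hij
      subst hj
      have hcase : h = Multiplicative.ofAdd ((1 : ℤ) : ZMod 2) := by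
        revert hne
        revert h
        decide
      subst hcase
      rintro τ' ⟨τ, hτ, rfl⟩
      have hτ' : 0 < τ.re := hτ
      show βf true (Multiplicative.ofAdd ((1 : ℤ) : ZMod 2)) • τ ∈ X true
      rw [βf_true_one]
      show ((κ sg) • τ).re < 0
      rw [κ_smul]
      exact lemA coe_sg τ hτ'
  · right
    refine ⟨false, ?_⟩
    rw [show Cardinal.mk (Hfam false) = 3 by rw [Cardinal.mk_fintype]; simp]

/-- The quotient map `Gbar → Perm ℍ` induced by `κ ∘ φ`. -/
noncomputable def φbar : Gbar →* Equiv.Perm ℍ := QuotientGroup.lift Z' (κ.comp φ) (by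
  intro x hx
  rcases Subgroup.mem_zpowers_iff.mp hx with ⟨k, rfl⟩
  rw [MonoidHom.mem_ker, map_zpow, MonoidHom.comp_apply, φ_z]
  have : κ (up ^ 3) = 1 := by
    rw [map_pow]
    exact κ_up_cube
  rw [this, one_zpow])

lemma φbar_π (g : G) : φbar (π g) = κ (φ g) := rfl

lemma hom_eq_on_zmod {n : ℕ} [NeZero n] {K : Type*} [Group K]
    {F F' : Multiplicative (ZMod n) →* K}
    (h : F (Multiplicative.ofAdd ((1 : ℤ) : ZMod n)) =
      F' (Multiplicative.ofAdd ((1 : ℤ) : ZMod n))) :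
    F = F' := by
  have hcast : ((1 : ℤ) : ZMod n) = (1 : ZMod n) := Int.cast_one
  rw [hcast] at h
  refine MonoidHom.ext fun x => ?_
  rw [multZmod_hom_eq_pow F, multZmod_hom_eq_pow F', h]

lemma α_of {i : Bool} (x : Hfam i) : α (Monoid.CoprodI.of x) = αf i x := by
  show Monoid.CoprodI.lift αf (Monoid.CoprodI.of x) = αf i x
  exact Monoid.CoprodI.lift_of αf x

lemma β_of {i : Bool} (x : Hfam i) : β (Monoid.CoprodI.of x) = βf i x := by
  show Monoid.CoprodI.lift βf (Monoid.CoprodI.of x) = βf i x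
  exact Monoid.CoprodI.lift_of βf x

lemma αf_false_one : αf false (Multiplicative.ofAdd ((1 : ℤ) : ZMod 3)) = π u := by
  rw [show αf false = zmodHom 3 (π u) πu_cube from rfl, zmodHom_apply]
  exact zpow_one _

lemma αf_true_one : αf true (Multiplicative.ofAdd ((1 : ℤ) : ZMod 2)) = π s := by
  rw [show αf true = zmodHom 2 (π s) πs_sq from rfl, zmodHom_apply]
  exact zpow_one _

lemma φbar_comp_α : φbar.comp α = β := by
  apply Monoid.CoprodI.ext_hom
  intro i
  cases i
  · -- ZMod 3 factor
    apply hom_eq_on_zmod (n := 3)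
    simp only [MonoidHom.comp_apply]
    rw [α_of, β_of, αf_false_one, βf_false_one, φbar_π, φ_u]
  · -- ZMod 2 factor
    apply hom_eq_on_zmod (n := 2)
    simp only [MonoidHom.comp_apply]
    rw [α_of, β_of, αf_true_one, βf_true_one, φbar_π, φ_s]

lemma α_surjective : Function.Surjective α := by
  intro x
  have hx : x ∈ α.range := by
    induction x using QuotientGroup.induction_on with
    | H g =>
      have hmem : g ∈ α.range.comap π := by
        apply PresentedGroup.generated_by
        intro j
        cases j
        · -- of false = b = s⁻¹ * u ^ 2
          have hb : PresentedGroup.of (rels := modRels) false = s⁻¹ * u ^ 2 := by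
            show b = s⁻¹ * u ^ 2
            rw [eq_inv_mul_iff_mul_eq, s_mul_b]
            show a * (a * b * a) = (a * b) ^ 2
            rw [rel1]
            simp [sq, mul_assoc]
          show π (PresentedGroup.of false) ∈ α.range
          rw [hb, map_mul, map_inv, map_pow]
          refine Subgroup.mul_mem _ (Subgroup.inv_mem _ ?_) (Subgroup.pow_mem _ ?_ _)
          · refine ⟨Monoid.CoprodI.of (i := true) (Multiplicative.ofAdd ((1 : ℤ) : ZMod 2)), ?_⟩
            rw [α_of, αf_true_one]
          · refine ⟨Monoid.CoprodI.of (i := false) (Multiplicative.ofAdd ((1 : ℤ) : ZMod 3)), ?_⟩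
            rw [α_of, αf_false_one]
        · -- of true = a = u⁻¹ * s
          have ha : PresentedGroup.of (rels := modRels) true = u⁻¹ * s := by
            show a = u⁻¹ * s
            rw [eq_inv_mul_iff_mul_eq]
            rfl
          show π (PresentedGroup.of true) ∈ α.range
          rw [ha, map_mul, map_inv]
          refine Subgroup.mul_mem _ (Subgroup.inv_mem _ ?_) ?_
          · refine ⟨Monoid.CoprodI.of (i := false) (Multiplicative.ofAdd ((1 : ℤ) : ZMod 3)), ?_⟩
            rw [α_of, αf_false_one]
          · refine ⟨Monoid.CoprodI.of (i := true) (Multiplicative.ofAdd ((1 : ℤ) : ZMod 2)), ?_⟩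
            rw [α_of, αf_true_one]
      exact hmem
  exact hx

lemma φ_injective : Function.Injective φ := by
  rw [injective_iff_map_eq_one]
  intro g hg
  have h1 : φbar (π g) = 1 := by
    rw [φbar_π, hg, map_one]
  obtain ⟨q, hq⟩ := α_surjective (π g)
  have h2 : β q = 1 := by
    rw [← φbar_comp_α, MonoidHom.comp_apply, hq, h1]
  have h3 : q = 1 := β_injective (by rw [h2, map_one])
  have h4 : π g = 1 := by rw [← hq, h3, map_one]
  have h5 : g ∈ Z' := (QuotientGroup.eq_one_iff g).mp h4
  rcases Subgroup.mem_zpowers_iff.mp h5 with ⟨k, rfl⟩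
  have hz2 : z ^ (2 : ℤ) = 1 := by
    rw [show (2 : ℤ) = ((2 : ℕ) : ℤ) from rfl, zpow_natCast, z_sq]
  rcases Int.even_or_odd k with ⟨m, hm⟩ | ⟨m, hm⟩
  · rw [hm, ← two_mul, zpow_mul, hz2, one_zpow]
  · exfalso
    have : z ^ k = z := by
      rw [hm, zpow_add, zpow_mul, zpow_one, hz2, one_zpow, one_mul]
    rw [this] at hg
    rw [φ_z] at hg
    exact up_cube_ne_one hg

/-- The isomorphism. -/
noncomputable def e : G ≃* SL2Z := MulEquiv.ofBijective φ ⟨φ_injective, φ_surjective⟩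

end SL2ZPresentation

/-- The group presented by two generators `a, b` subject to the relations
`aba = bab` and `(ab)⁶ = 1` is isomorphic to `SL(2,ℤ)` via the isomorphism
induced by `a ↦ u₁₂`, `b ↦ u₂₁`. -/
theorem presentedGroup_mulEquiv_SL2Z :
    ∃ e : PresentedGroup modRels ≃* Matrix.SpecialLinearGroup (Fin 2) ℤ,
      e (PresentedGroup.of true) = u12 ∧ e (PresentedGroup.of false) = u21 := by
  refine ⟨SL2ZPresentation.e, ?_, ?_⟩
  · exact SL2ZPresentation.φ_a
  · exact SL2ZPresentation.φ_b
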